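/- arXiv:1609.03891 — 3 statements merged into one kernel-verified Lean document; each statement's English description precedes it below -/
import Mathlib

section
/- Let σⁿ = (σⁿ_t; t ∈ {0,1,…,t_n}) be a permutation process of the symmetric group S_n (with σⁿ_0 the identity) for each n, with t_n → ∞ as n → ∞. Suppose the trajectory processes Xⁿ (Borel probability measures on C([0,1],[-1,1])) converge weakly to the law of a stochastic process X with continuous sample paths. Then X is a permuton process, i.e. X(t) is uniformly distributed on [-1,1] for every t ∈ [0,1]. -/
open MeasureTheory Set Filter
open scoped ENNReal Real Topology
open scoped NNReal

/-- The uniform probability measure on [-1,1]. -/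
noncomputable def unif : Measure ℝ := (2 : ℝ≥0∞)⁻¹ • (volume.restrict (Icc (-1 : ℝ) 1))

lemma unif_integral (g : ℝ → ℝ) :
    ∫ x, g x ∂unif = 2⁻¹ * ∫ x in (-1:ℝ)..1, g x := by
  rw [unif, integral_smul_measure, intervalIntegral.integral_of_le (by norm_num : (-1:ℝ) ≤ 1),
    ← MeasureTheory.integral_Icc_eq_integral_Ioc]
  norm_num

instance : IsProbabilityMeasure unif := by
  constructor
  rw [unif]
  simp [Measure.restrict_apply, Real.volume_Icc]
  norm_num
  exact ENNReal.inv_mul_cancel (by norm_num) (by norm_num)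

lemma riemann_sum_tendsto (g : ℝ → ℝ) (L : ℝ≥0) (hg : LipschitzWith L g) :
    Tendsto (fun n : ℕ => (1/(n:ℝ)) * ∑ j : Fin n, g (2 * (((j : ℕ) : ℝ) + 1) / n - 1)) atTop
      (𝓝 (∫ x, g x ∂unif)) := by
  have key : ∀ n : ℕ, 1 ≤ n →
      |(1/(n:ℝ)) * ∑ j : Fin n, g (2 * (((j : ℕ) : ℝ) + 1) / n - 1) - ∫ x, g x ∂unif|
        ≤ 2 * L / n := by
    intro n hn
    have hn0 : (0:ℝ) < n := by exact_mod_cast hn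
    obtain ⟨a, ha⟩ : ∃ a : ℕ → ℝ, a = fun j : ℕ => 2 * (j:ℝ) / n - 1 := ⟨_, rfl⟩
    have hint : ∀ k < n, IntervalIntegrable g volume (a k) (a (k+1)) := fun k _ =>
      hg.continuous.intervalIntegrable _ _
    have hsum := intervalIntegral.sum_integral_adjacent_intervals hint
    have ha0 : a 0 = -1 := by rw [ha]; norm_num
    have han : a n = 1 := by rw [ha]; field_simp; ring
    have hterm : ∀ k, |(∫ x in a k..a (k+1), g x) - (2/n) * g (a (k+1))|
        ≤ ((L:ℝ) * (2/n)) * (2/n) := by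
      intro k
      have hlen : a (k+1) - a k = 2/n := by rw [ha]; push_cast; field_simp; ring
      have hle : a k ≤ a (k+1) := by rw [← sub_nonneg, hlen]; positivity
      have hc : (2/(n:ℝ)) * g (a (k+1)) = ∫ _x in a k..a (k+1), g (a (k+1)) := by
        rw [intervalIntegral.integral_const, smul_eq_mul, hlen]
      rw [hc, ← intervalIntegral.integral_sub (hg.continuous.intervalIntegrable _ _) (by simp)]
      have hb : ∀ x ∈ Set.uIoc (a k) (a (k+1)), ‖g x - g (a (k+1))‖ ≤ (L:ℝ) * (2/n) := by
        intro x hx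
        rw [uIoc_of_le hle] at hx
        obtain ⟨hx1, hx2⟩ := hx
        have h1 := hg.dist_le_mul x (a (k+1))
        rw [Real.dist_eq, Real.dist_eq] at h1
        have h2 : |x - a (k+1)| ≤ 2/n := by
          rw [abs_le]; constructor <;> linarith
        calc ‖g x - g (a (k+1))‖ = |g x - g (a (k+1))| := rfl
          _ ≤ (L:ℝ) * |x - a (k+1)| := h1
          _ ≤ (L:ℝ) * (2/n) := by
              have hL : (0:ℝ) ≤ L := L.coe_nonneg
              nlinarith
      have h3 := intervalIntegral.norm_integral_le_of_norm_le_const hb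
      rw [hlen] at h3
      calc |(∫ x in a k..a (k+1), g x - g (a (k+1)))| ≤ (L:ℝ) * (2/n) * |2/(n:ℝ)| := h3
        _ ≤ (L:ℝ) * (2/n) * (2/n) := by rw [abs_of_nonneg (by positivity : (0:ℝ) ≤ 2/n)]
    have hS : ∑ j : Fin n, g (2 * (((j : ℕ) : ℝ) + 1) / n - 1)
        = ∑ k ∈ Finset.range n, g (a (k+1)) := by
      rw [Fin.sum_univ_eq_sum_range (fun k : ℕ => g (2 * ((k:ℝ) + 1) / ↑n - 1)) n]
      refine Finset.sum_congr rfl fun k _ => ?_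
      congr 1
      rw [ha]
      push_cast
      ring
    have hI : ∫ x, g x ∂unif = 2⁻¹ * ∑ k ∈ Finset.range n, ∫ x in a k..a (k+1), g x := by
      rw [unif_integral, hsum, ha0, han]
    have habs : |(∑ k ∈ Finset.range n, ∫ x in a k..a (k+1), g x)
          - ∑ k ∈ Finset.range n, (2/(n:ℝ)) * g (a (k+1))| ≤ 4 * L / n := by
      rw [← Finset.sum_sub_distrib]
      calc _ ≤ ∑ k ∈ Finset.range n, |(∫ x in a k..a (k+1), g x) - (2/(n:ℝ)) * g (a (k+1))| :=
            Finset.abs_sum_le_sum_abs _ _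
        _ ≤ ∑ _k ∈ Finset.range n, ((L:ℝ) * (2/n)) * (2/n) :=
            Finset.sum_le_sum fun k _ => hterm k
        _ = n * (((L:ℝ) * (2/n)) * (2/n)) := by rw [Finset.sum_const, Finset.card_range]; ring
        _ = 4 * L / n := by field_simp; ring
    rw [hS, hI]
    have heq : (1/(n:ℝ)) * ∑ k ∈ Finset.range n, g (a (k+1))
          - 2⁻¹ * ∑ k ∈ Finset.range n, ∫ x in a k..a (k+1), g x
        = (-2⁻¹ : ℝ) * ((∑ k ∈ Finset.range n, ∫ x in a k..a (k+1), g x)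
          - ∑ k ∈ Finset.range n, (2/(n:ℝ)) * g (a (k+1))) := by
      rw [← Finset.mul_sum]
      field_simp
      ring
    rw [heq, abs_mul]
    have h4 : |(-2⁻¹ : ℝ)| = 2⁻¹ := by norm_num
    rw [h4]
    calc 2⁻¹ * |_| ≤ 2⁻¹ * (4 * (L:ℝ) / n) := by
          exact mul_le_mul_of_nonneg_left habs (by norm_num)
      _ = 2 * L / n := by ring
  have h0 : Tendsto (fun n : ℕ => 2 * (L:ℝ) / n) atTop (𝓝 0) :=
    tendsto_const_nhds.div_atTop tendsto_natCast_atTop_atTop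
  rw [tendsto_iff_dist_tendsto_zero]
  apply squeeze_zero' (Eventually.of_forall fun n => dist_nonneg)
    ((eventually_ge_atTop 1).mono fun n hn => by
      rw [Real.dist_eq]; exact key n hn) h0

lemma iSup_subtype_eq_of_denseRange {A : Type*} [MetricSpace A] {J : Set A}
    (u : ℕ → J) (hu : DenseRange u) (h : A → ℝ) (hc : Continuous h)
    (C : ℝ) (hb : ∀ x, |h x| ≤ C) :
    ⨆ s : J, h s = ⨆ m : ℕ, h (u m) := by
  haveI : Nonempty J := ⟨u 0⟩
  have bdd1 : BddAbove (range fun s : J => h s) :=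
    ⟨C, by rintro _ ⟨s, rfl⟩; exact (abs_le.mp (hb _)).2⟩
  have bdd2 : BddAbove (range fun m : ℕ => h (u m)) :=
    ⟨C, by rintro _ ⟨m, rfl⟩; exact (abs_le.mp (hb _)).2⟩
  refine le_antisymm (ciSup_le fun s => ?_) (ciSup_le fun m => le_ciSup bdd1 (u m))
  obtain ⟨v, hv1, hv2⟩ := mem_closure_iff_seq_limit.mp (hu s)
  have hcv : Tendsto (fun n => h (v n)) atTop (𝓝 (h s)) :=
    ((hc.comp continuous_subtype_val).tendsto s).comp hv2
  refine le_of_tendsto hcv (Eventually.of_forall fun n => ?_)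
  obtain ⟨m, hm⟩ := hv1 n
  calc h (v n) = h (u m) := by rw [hm]
    _ ≤ ⨆ m, h (u m) := le_ciSup bdd2 m

lemma key_le {Ω : Type*} [MeasurableSpace Ω] (P : Measure Ω) [IsProbabilityMeasure P]
    (tn : ℕ → ℕ) (htn : Tendsto tn atTop atTop)
    (σ : (n : ℕ) → ℕ → Equiv.Perm (Fin n))
    (T : (n : ℕ) → Fin n → C(Icc (0:ℝ) 1, ℝ))
    (hT : ∀ n : ℕ, ∀ i : Fin n, ∀ k : ℕ, k < tn n → ∀ s : Icc (0:ℝ) 1,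
      (k : ℝ) / tn n ≤ (s : ℝ) → (s : ℝ) ≤ ((k : ℝ) + 1) / tn n →
      T n i s = (tn n : ℝ) *
        ((((k : ℝ) + 1) / tn n - (s : ℝ)) * (2 * (((σ n k i : ℕ) : ℝ) + 1) / n - 1) +
          ((s : ℝ) - (k : ℝ) / tn n) * (2 * (((σ n (k + 1) i : ℕ) : ℝ) + 1) / n - 1)))
    (X : ℝ → Ω → ℝ)
    (hXcont : ∀ ω, Continuous fun s : Icc (0:ℝ) 1 => X (s : ℝ) ω)
    (hXmeas : ∀ t ∈ Icc (0:ℝ) 1, Measurable (X t))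
    (hconv : ∀ F : C(Icc (0:ℝ) 1, ℝ) → ℝ, UniformContinuous F → (∃ M : ℝ, ∀ f, |F f| ≤ M) →
      Tendsto (fun n : ℕ => (1 / (n : ℝ)) * ∑ i : Fin n, F (T n i)) atTop
        (𝓝 (∫ ω, F ⟨fun s : Icc (0:ℝ) 1 => X (s : ℝ) ω, hXcont ω⟩ ∂P)))
    (t : ℝ) (ht : t ∈ Icc (0:ℝ) 1)
    (g : ℝ → ℝ) (L : ℝ≥0) (hgl : LipschitzWith L g) (C : ℝ) (hgb : ∀ x, |g x| ≤ C) :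
    ∫ x, g x ∂unif ≤ ∫ ω, g (X t ω) ∂P := by
  have hgc : Continuous g := hgl.continuous
  have main : ∀ δ : ℝ, 0 < δ →
      ∫ x, g x ∂unif ≤
        ∫ ω, (⨆ s : {s : Icc (0:ℝ) 1 | dist ((s : Icc (0:ℝ) 1) : ℝ) t ≤ δ},
          g (X ((s : Icc (0:ℝ) 1) : ℝ) ω)) ∂P := by
    intro δ hδ
    haveI hne : Nonempty {s : Icc (0:ℝ) 1 | dist ((s : Icc (0:ℝ) 1) : ℝ) t ≤ δ} :=
      ⟨⟨⟨t, ht⟩, by simp only [mem_setOf_eq, dist_self]; exact hδ.le⟩⟩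
    set F : C(Icc (0:ℝ) 1, ℝ) → ℝ :=
      fun f => ⨆ s : {s : Icc (0:ℝ) 1 | dist ((s : Icc (0:ℝ) 1) : ℝ) t ≤ δ},
        g (f ((s : Icc (0:ℝ) 1))) with hF
    have bddA : ∀ f : C(Icc (0:ℝ) 1, ℝ),
        BddAbove (range fun s : {s : Icc (0:ℝ) 1 | dist ((s : Icc (0:ℝ) 1) : ℝ) t ≤ δ} =>
          g (f ((s : Icc (0:ℝ) 1)))) :=
      fun f => ⟨C, by rintro _ ⟨s, rfl⟩; exact (abs_le.mp (hgb _)).2⟩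
    have key2 : ∀ f f' : C(Icc (0:ℝ) 1, ℝ), F f ≤ F f' + L * dist f f' := by
      intro f f'
      refine ciSup_le fun s => ?_
      have h1 : |g (f s) - g (f' s)| ≤ (L:ℝ) * dist (f s) (f' s) := by
        have := hgl.dist_le_mul (f s) (f' s); rwa [Real.dist_eq] at this
      have h2 : dist (f s) (f' s) ≤ dist f f' := ContinuousMap.dist_apply_le_dist _
      have h3 : g (f' s) ≤ F f' := le_ciSup (bddA f') s
      have hL : (0:ℝ) ≤ L := L.coe_nonneg
      have h4 := (abs_le.mp h1).2
      nlinarith [mul_le_mul_of_nonneg_left h2 hL]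
    have hFuc : UniformContinuous F := by
      refine LipschitzWith.uniformContinuous (K := L) (LipschitzWith.of_dist_le_mul fun f f' => ?_)
      rw [Real.dist_eq, abs_sub_le_iff]
      have k1 := key2 f f'
      have k2 := key2 f' f
      rw [dist_comm f' f] at k2
      constructor <;> linarith
    have hFb : ∀ f, |F f| ≤ C := by
      intro f
      rw [abs_le]
      constructor
      · exact le_ciSup_of_le (bddA f) hne.some (abs_le.mp (hgb _)).1
      · exact ciSup_le fun s => (abs_le.mp (hgb _)).2
    have hten := hconv F hFuc ⟨C, hFb⟩
    obtain ⟨N1, hN1⟩ := tendsto_atTop_atTop.mp htn (max 1 ⌈1/δ⌉₊)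
    have hev : ∀ᶠ n : ℕ in atTop,
        (1/(n:ℝ)) * ∑ j : Fin n, g (2 * (((j : ℕ) : ℝ) + 1) / n - 1)
          ≤ (1/(n:ℝ)) * ∑ i : Fin n, F (T n i) := by
      filter_upwards [eventually_ge_atTop N1] with n hn
      have htn1 : 1 ≤ tn n := le_trans (le_max_left _ _) (hN1 n hn)
      have htnpos : (0:ℝ) < tn n := by exact_mod_cast htn1
      have htnδ : 1/(tn n : ℝ) ≤ δ := by
        have h1 : (⌈1/δ⌉₊ : ℝ) ≤ tn n := by exact_mod_cast le_trans (le_max_right _ _) (hN1 n hn)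
        have h2 : 1/δ ≤ (⌈1/δ⌉₊:ℝ) := Nat.le_ceil _
        have h3 : 1/δ ≤ (tn n : ℝ) := le_trans h2 h1
        rw [div_le_iff₀ hδ] at h3
        rw [div_le_iff₀ htnpos]
        linarith
      obtain ⟨k, hkdef⟩ : ∃ k : ℕ, k = min (⌊t * tn n⌋₊) (tn n - 1) := ⟨_, rfl⟩
      have hklt : k < tn n := by omega
      have htpos : 0 ≤ t * tn n := mul_nonneg ht.1 htnpos.le
      have hkle : (k:ℝ) ≤ t * tn n ∧ t * tn n ≤ (k:ℝ) + 1 := by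
        rcases le_or_gt (⌊t * tn n⌋₊) (tn n - 1) with hc | hc
        · have hk' : k = ⌊t * tn n⌋₊ := by omega
          subst hk'
          exact ⟨Nat.floor_le htpos, (Nat.lt_floor_add_one _).le⟩
        · have hge : (tn n : ℝ) ≤ t * tn n := by
            have h5 : tn n ≤ ⌊t * tn n⌋₊ := by omega
            exact le_trans (by exact_mod_cast h5) (Nat.floor_le htpos)
          have hle' : t * tn n ≤ tn n := by nlinarith [ht.2]
          have heq : t * tn n = tn n := le_antisymm hle' hge
          have hk' : k = tn n - 1 := by omega
          subst hk'
          rw [heq]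
          push_cast [Nat.cast_sub htn1]
          constructor <;> linarith
      have hs0mem : (k:ℝ)/tn n ∈ Icc (0:ℝ) 1 := by
        constructor
        · positivity
        · rw [div_le_one htnpos]; exact_mod_cast hklt.le
      have e1 : (k:ℝ)/tn n ≤ t := by rw [div_le_iff₀ htnpos]; linarith [hkle.1]
      have e2 : t ≤ ((k:ℝ)+1)/tn n := by rw [le_div_iff₀ htnpos]; linarith [hkle.2]
      have hs0dist : dist (((⟨(k:ℝ)/tn n, hs0mem⟩ : Icc (0:ℝ) 1) : Icc (0:ℝ) 1) : ℝ) t ≤ δ := by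
        have hcoe : (((⟨(k:ℝ)/tn n, hs0mem⟩ : Icc (0:ℝ) 1)) : ℝ) = (k:ℝ)/tn n := rfl
        rw [Real.dist_eq, hcoe, abs_le]
        have hsplit : ((k:ℝ)+1)/tn n = (k:ℝ)/tn n + 1/tn n := by ring
        constructor
        · rw [hsplit] at e2; linarith
        · have : (0:ℝ) < 1/tn n := by positivity
          linarith
      have hTs0 : ∀ i : Fin n,
          T n i ⟨(k:ℝ)/tn n, hs0mem⟩ = 2 * (((σ n k i : ℕ) : ℝ) + 1) / n - 1 := by
        intro i
        have hstep := hT n i k hklt ⟨(k:ℝ)/tn n, hs0mem⟩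
        have hcoe : (((⟨(k:ℝ)/tn n, hs0mem⟩ : Icc (0:ℝ) 1)) : ℝ) = (k:ℝ)/tn n := rfl
        rw [hcoe] at hstep
        have h7 := hstep (le_refl _) (by gcongr <;> linarith)
        rw [h7]
        have hu0 : (tn n:ℝ) ≠ 0 := ne_of_gt htnpos
        field_simp
        ring
      have hsum_le : ∑ j : Fin n, g (2 * (((j : ℕ) : ℝ) + 1) / n - 1)
          ≤ ∑ i : Fin n, F (T n i) := by
        have hre : ∑ j : Fin n, g (2 * (((j:ℕ):ℝ) + 1) / n - 1)
            = ∑ i : Fin n, g (2 * (((σ n k i : ℕ):ℝ) + 1) / n - 1) :=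
          (Equiv.sum_comp (σ n k) fun j => g (2 * (((j:ℕ):ℝ) + 1) / n - 1)).symm
        rw [hre]
        refine Finset.sum_le_sum fun i _ => ?_
        have h8 : g (2 * (((σ n k i : ℕ):ℝ) + 1) / n - 1)
            = g (T n i ⟨(k:ℝ)/tn n, hs0mem⟩) := by rw [hTs0]
        rw [h8, hF]
        exact le_ciSup_of_le (bddA (T n i)) ⟨⟨(k:ℝ)/tn n, hs0mem⟩, hs0dist⟩ (le_refl _)
      exact mul_le_mul_of_nonneg_left hsum_le (by positivity)
    have hfin := le_of_tendsto_of_tendsto (riemann_sum_tendsto g L hgl) hten hev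
    simpa only [hF, ContinuousMap.coe_mk] using hfin
  obtain ⟨δm, hδm⟩ : ∃ δm : ℕ → ℝ, δm = fun m : ℕ => 1/((m:ℝ)+1) := ⟨_, rfl⟩
  have hδmpos : ∀ m, 0 < δm m := fun m => by rw [hδm]; positivity
  have hnem : ∀ m : ℕ, Nonempty {s : Icc (0:ℝ) 1 | dist ((s : Icc (0:ℝ) 1) : ℝ) t ≤ δm m} :=
    fun m => ⟨⟨⟨t, ht⟩, by simp only [mem_setOf_eq, dist_self]; exact (hδmpos m).le⟩⟩
  have bddB : ∀ (m : ℕ) (ω : Ω),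
      BddAbove (range fun s : {s : Icc (0:ℝ) 1 | dist ((s : Icc (0:ℝ) 1) : ℝ) t ≤ δm m} =>
        g (X ((s : Icc (0:ℝ) 1) : ℝ) ω)) :=
    fun m ω => ⟨C, by rintro _ ⟨s, rfl⟩; exact (abs_le.mp (hgb _)).2⟩
  have hdct : Tendsto (fun m : ℕ =>
      ∫ ω, (⨆ s : {s : Icc (0:ℝ) 1 | dist ((s : Icc (0:ℝ) 1) : ℝ) t ≤ δm m},
        g (X ((s : Icc (0:ℝ) 1) : ℝ) ω)) ∂P) atTop (𝓝 (∫ ω, g (X t ω) ∂P)) := by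
    refine tendsto_integral_of_dominated_convergence (fun _ => C) ?_ (integrable_const C) ?_ ?_
    · intro m
      haveI := hnem m
      obtain ⟨u, hu⟩ := TopologicalSpace.exists_dense_seq
        ↥{s : Icc (0:ℝ) 1 | dist ((s : Icc (0:ℝ) 1) : ℝ) t ≤ δm m}
      have heq : (fun ω => ⨆ s : {s : Icc (0:ℝ) 1 | dist ((s : Icc (0:ℝ) 1) : ℝ) t ≤ δm m},
            g (X ((s : Icc (0:ℝ) 1) : ℝ) ω))
          = fun ω => ⨆ j : ℕ, g (X (((u j : Icc (0:ℝ) 1)) : ℝ) ω) := by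
        funext ω
        exact iSup_subtype_eq_of_denseRange u hu (fun s : Icc (0:ℝ) 1 => g (X (s:ℝ) ω))
          (hgc.comp (hXcont ω)) C (fun x => hgb _)
      rw [heq]
      refine (Measurable.iSup fun j => ?_).aestronglyMeasurable
      exact hgc.measurable.comp (hXmeas _ (u j).1.2)
    · intro m
      refine Eventually.of_forall fun ω => ?_
      haveI := hnem m
      rw [Real.norm_eq_abs, abs_le]
      constructor
      · exact le_ciSup_of_le (bddB m ω) (hnem m).some (abs_le.mp (hgb _)).1
      · exact ciSup_le fun s => (abs_le.mp (hgb _)).2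
    · refine Eventually.of_forall fun ω => ?_
      rw [Metric.tendsto_atTop]
      intro ε hε
      have hcont : ContinuousAt (fun s : Icc (0:ℝ) 1 => g (X (s:ℝ) ω)) ⟨t, ht⟩ :=
        (hgc.comp (hXcont ω)).continuousAt
      obtain ⟨δ0, hδ0pos, hδ0⟩ := Metric.continuousAt_iff.mp hcont (ε/2) (by positivity)
      obtain ⟨M, hM⟩ := exists_nat_gt (1/δ0)
      refine ⟨M, fun m hm => ?_⟩
      have hδmlt : δm m < δ0 := by
        rw [hδm]
        rw [div_lt_iff₀ (by positivity)]
        have hMm : (M:ℝ) ≤ m := by exact_mod_cast hm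
        rw [div_lt_iff₀ hδ0pos] at hM
        nlinarith
      haveI := hnem m
      have hub : ∀ s : {s : Icc (0:ℝ) 1 | dist ((s : Icc (0:ℝ) 1) : ℝ) t ≤ δm m},
          g (X (((s : Icc (0:ℝ) 1)) : ℝ) ω) ≤ g (X t ω) + ε/2 := by
        intro s
        have hd : dist ((s : Icc (0:ℝ) 1)) (⟨t, ht⟩ : Icc (0:ℝ) 1) < δ0 := by
          rw [Subtype.dist_eq]
          exact lt_of_le_of_lt s.2 hδmlt
        have h9 := hδ0 hd
        rw [Real.dist_eq] at h9
        have h10 := (abs_lt.mp h9).2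
        linarith
      have hge : g (X t ω) ≤ ⨆ s : {s : Icc (0:ℝ) 1 | dist ((s : Icc (0:ℝ) 1) : ℝ) t ≤ δm m},
          g (X ((s : Icc (0:ℝ) 1) : ℝ) ω) :=
        le_ciSup_of_le (bddB m ω)
          ⟨⟨t, ht⟩, by simp only [mem_setOf_eq, dist_self]; exact (hδmpos m).le⟩ (le_refl _)
      have hle2 : (⨆ s : {s : Icc (0:ℝ) 1 | dist ((s : Icc (0:ℝ) 1) : ℝ) t ≤ δm m},
          g (X ((s : Icc (0:ℝ) 1) : ℝ) ω)) ≤ g (X t ω) + ε/2 := ciSup_le hub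
      rw [Real.dist_eq]
      have h11 : |(⨆ s : {s : Icc (0:ℝ) 1 | dist ((s : Icc (0:ℝ) 1) : ℝ) t ≤ δm m},
          g (X ((s : Icc (0:ℝ) 1) : ℝ) ω)) - g (X t ω)| ≤ ε/2 :=
        abs_le.mpr ⟨by linarith, by linarith⟩
      linarith
  exact ge_of_tendsto' hdct fun m => main (δm m) (hδmpos m)


/-- a weak limit of the trajectory processes of permutation processes
(with lengths tₙ → ∞) is a permuton process: X(t) ~ Uniform[-1,1] for every t ∈ [0,1]. -/
theorem limit_of_permutation_processes_is_permuton_process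
    {Ω : Type*} [MeasurableSpace Ω] (P : Measure Ω) [IsProbabilityMeasure P]
    (tn : ℕ → ℕ) (htn : Tendsto tn atTop atTop)
    (σ : (n : ℕ) → ℕ → Equiv.Perm (Fin n)) (hσ0 : ∀ n, σ n 0 = 1)
    (T : (n : ℕ) → Fin n → C(Icc (0:ℝ) 1, ℝ))
    (hT : ∀ n : ℕ, ∀ i : Fin n, ∀ k : ℕ, k < tn n → ∀ s : Icc (0:ℝ) 1,
      (k : ℝ) / tn n ≤ (s : ℝ) → (s : ℝ) ≤ ((k : ℝ) + 1) / tn n →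
      T n i s = (tn n : ℝ) *
        ((((k : ℝ) + 1) / tn n - (s : ℝ)) * (2 * (((σ n k i : ℕ) : ℝ) + 1) / n - 1) +
          ((s : ℝ) - (k : ℝ) / tn n) * (2 * (((σ n (k + 1) i : ℕ) : ℝ) + 1) / n - 1)))
    (X : ℝ → Ω → ℝ)
    (hXcont : ∀ ω, Continuous fun s : Icc (0:ℝ) 1 => X (s : ℝ) ω)
    (hXmeas : ∀ t ∈ Icc (0:ℝ) 1, Measurable (X t))
    (hconv : ∀ F : C(Icc (0:ℝ) 1, ℝ) → ℝ, UniformContinuous F → (∃ M : ℝ, ∀ f, |F f| ≤ M) →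
      Tendsto (fun n : ℕ => (1 / (n : ℝ)) * ∑ i : Fin n, F (T n i)) atTop
        (𝓝 (∫ ω, F ⟨fun s : Icc (0:ℝ) 1 => X (s : ℝ) ω, hXcont ω⟩ ∂P))) :
    ∀ t ∈ Icc (0:ℝ) 1, P.map (X t) = unif := by
  intro t ht
  have hmeas := hXmeas t ht
  have key : ∀ (g : ℝ → ℝ) (L : ℝ≥0), LipschitzWith L g → ∀ C : ℝ, (∀ x, |g x| ≤ C) →
      ∫ x, g x ∂unif = ∫ ω, g (X t ω) ∂P := by
    intro g L hgl C hgb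
    have h1 := key_le P tn htn σ T hT X hXcont hXmeas hconv t ht g L hgl C hgb
    have h2 := key_le P tn htn σ T hT X hXcont hXmeas hconv t ht (fun x => -g x) L
      hgl.neg C (fun x => by rw [abs_neg]; exact hgb x)
    simp only [integral_neg] at h2
    linarith
  haveI : IsProbabilityMeasure (P.map (X t)) := Measure.isProbabilityMeasure_map hmeas.aemeasurable
  refine Measure.ext_of_Iic (P.map (X t)) unif fun a => ?_
  obtain ⟨G, hG⟩ : ∃ G : ℕ → ℝ → ℝ,
      G = fun (m : ℕ) (x : ℝ) => min (max (1 + (m:ℝ)*(a - x)) 0) 1 := ⟨_, rfl⟩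
  have hGlip : ∀ m : ℕ, LipschitzWith (m : ℝ≥0) (G m) := by
    intro m
    rw [hG]
    have hinner : LipschitzWith (m : ℝ≥0) (fun x : ℝ => 1 + (m:ℝ)*(a - x)) := by
      refine LipschitzWith.of_dist_le_mul fun x y => ?_
      rw [Real.dist_eq, Real.dist_eq]
      have he : (1 + (m:ℝ)*(a-x)) - (1 + (m:ℝ)*(a-y)) = -((m:ℝ)*(x-y)) := by ring
      rw [he, abs_neg, abs_mul, Nat.abs_cast, NNReal.coe_natCast]
    exact (hinner.max_const 0).min_const 1
  have hGb : ∀ (m : ℕ) (x : ℝ), |G m x| ≤ 1 := by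
    intro m x
    rw [hG, abs_le]
    constructor
    · have : (0:ℝ) ≤ min (max (1 + (m:ℝ)*(a - x)) 0) 1 :=
        le_min (le_max_right _ _) zero_le_one
      linarith
    · exact min_le_right _ _
  have hGlim : ∀ x : ℝ, Tendsto (fun m : ℕ => G m x) atTop
      (𝓝 ((Iic a).indicator (fun _ => (1:ℝ)) x)) := by
    intro x
    rcases le_or_gt x a with hx | hx
    · have hval : ∀ m : ℕ, G m x = 1 := by
        intro m
        rw [hG]
        have h1 : (1:ℝ) ≤ 1 + (m:ℝ)*(a-x) := by
          nlinarith [Nat.cast_nonneg (α := ℝ) m, sub_nonneg.mpr hx,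
            mul_nonneg (Nat.cast_nonneg (α := ℝ) m) (sub_nonneg.mpr hx)]
        simp only
        rw [max_eq_left (le_trans zero_le_one h1), min_eq_right h1]
      have hind : (Iic a).indicator (fun _ => (1:ℝ)) x = 1 := indicator_of_mem (mem_Iic.mpr hx) _
      rw [hind]
      simp only [hval]
      exact tendsto_const_nhds
    · have hind : (Iic a).indicator (fun _ => (1:ℝ)) x = 0 :=
        indicator_of_notMem (by simpa using hx.not_ge) _
      rw [hind]
      have hev : (fun m : ℕ => G m x) =ᶠ[atTop] fun _ => (0:ℝ) := by
        obtain ⟨M, hM⟩ := exists_nat_gt (1/(x-a))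
        filter_upwards [eventually_ge_atTop M] with m hm
        have hxa : 0 < x - a := sub_pos.mpr hx
        have h2 : 1/(x-a) < (m:ℝ) := lt_of_lt_of_le hM (by exact_mod_cast hm)
        rw [div_lt_iff₀ hxa] at h2
        have h1 : 1 + (m:ℝ)*(a-x) ≤ 0 := by nlinarith
        rw [hG]
        simp only
        rw [max_eq_right h1, min_eq_left zero_le_one]
      exact Tendsto.congr' hev.symm tendsto_const_nhds
  have hDCT : ∀ (μ : Measure ℝ), IsProbabilityMeasure μ →
      Tendsto (fun m : ℕ => ∫ x, G m x ∂μ) atTop (𝓝 ((μ (Iic a)).toReal)) := by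
    intro μ hμ
    have hlim := tendsto_integral_of_dominated_convergence (μ := μ)
      (F := fun m => G m) (f := (Iic a).indicator (fun _ => (1:ℝ))) (fun _ => (1:ℝ))
      (fun m => ((hGlip m).continuous).aestronglyMeasurable)
      (integrable_const 1)
      (fun m => Eventually.of_forall fun x => by rw [Real.norm_eq_abs]; exact hGb m x)
      (Eventually.of_forall hGlim)
    have hval : ∫ x, (Iic a).indicator (fun _ => (1:ℝ)) x ∂μ = (μ (Iic a)).toReal := by
      rw [integral_indicator_const (1:ℝ) measurableSet_Iic, smul_eq_mul, mul_one]
      exact rfl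
    rwa [hval] at hlim
  have hmap : ∀ m : ℕ, ∫ x, G m x ∂(P.map (X t)) = ∫ x, G m x ∂unif := by
    intro m
    rw [integral_map hmeas.aemeasurable ((hGlip m).continuous.aestronglyMeasurable)]
    exact (key (G m) _ (hGlip m) 1 (hGb m)).symm
  have h1 := hDCT (P.map (X t)) inferInstance
  have h2 := hDCT unif inferInstance
  have h3 : Tendsto (fun m : ℕ => ∫ x, G m x ∂unif) atTop
      (𝓝 ((P.map (X t) (Iic a)).toReal)) := h1.congr fun m => hmap m
  have h4 := tendsto_nhds_unique h3 h2
  exact (ENNReal.toReal_eq_toReal_iff' (measure_ne_top _ _) (measure_ne_top _ _)).mp h4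
end

section
/- Let X = (X(t); 0 ≤ t ≤ 1) be a permuton process satisfying X(1) = −X(0) almost surely. Then the energy of X satisfies E(X) ≥ π²/3, where E(X) = sup_Π Σ_{i=1}^k E[|X(t_i) − X(t_{i−1})|²]/(t_i − t_{i−1}), the supremum taken over all finite partitions Π = {0 = t_0 < t_1 < ⋯ < t_k = 1} of [0,1]. -/
open MeasureTheory Set Filter
open scoped ENNReal Real Topology

/-- `t 0 = 0 < t 1 < ... < t k = 1` is a finite partition of [0,1]. -/
def IsPartition (k : ℕ) (t : ℕ → ℝ) : Prop :=
  0 < k ∧ t 0 = 0 ∧ t k = 1 ∧ ∀ i < k, t i < t (i + 1)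

/-- The energy of a path along partitions of [0,1], expressed in terms of the
squared-distance function `D s t` between the points `γ s` and `γ t` of the path:
`E = sup_Π Σ_i d(γ(t_i),γ(t_{i-1}))² / (t_i - t_{i-1})`. -/
noncomputable def energyOf (D : ℝ → ℝ → ℝ) : ℝ≥0∞ :=
  ⨆ (k : ℕ) (t : ℕ → ℝ) (_ : IsPartition k t),
    ENNReal.ofReal (∑ i ∈ Finset.range k, D (t i) (t (i + 1)) / (t (i + 1) - t i))

open scoped RealInnerProductSpace

/-- planar chord identity -/
lemma plane_chord {r α β : ℝ} (hr : 0 < r) (hα : |α| ≤ r) (hβ : |β| ≤ r) :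
    2*r^2*(1 - Real.cos (Real.arccos (β/r) - Real.arccos (α/r)))
      = (β - α)^2 + (Real.sqrt (r^2-β^2) - Real.sqrt (r^2-α^2))^2 := by
  obtain ⟨A, rfl⟩ : ∃ A, α = A * r := ⟨α / r, (div_mul_cancel₀ α hr.ne').symm⟩
  obtain ⟨B, rfl⟩ : ∃ B, β = B * r := ⟨β / r, (div_mul_cancel₀ β hr.ne').symm⟩
  have hA : A * r / r = A := mul_div_cancel_right₀ A hr.ne'
  have hB : B * r / r = B := mul_div_cancel_right₀ B hr.ne'
  have hA1 : |A| ≤ 1 := by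
    rw [abs_mul, abs_of_pos hr] at hα
    nlinarith [abs_nonneg A]
  have hB1 : |B| ≤ 1 := by
    rw [abs_mul, abs_of_pos hr] at hβ
    nlinarith [abs_nonneg B]
  have hga : Real.sqrt (r^2 - (A*r)^2) = r * Real.sqrt (1 - A^2) := by
    rw [show r^2 - (A*r)^2 = r^2 * (1 - A^2) by ring,
      Real.sqrt_mul (sq_nonneg r), Real.sqrt_sq hr.le]
  have hgb : Real.sqrt (r^2 - (B*r)^2) = r * Real.sqrt (1 - B^2) := by
    rw [show r^2 - (B*r)^2 = r^2 * (1 - B^2) by ring,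
      Real.sqrt_mul (sq_nonneg r), Real.sqrt_sq hr.le]
  have ha2 : Real.sqrt (1 - A^2) ^ 2 = 1 - A^2 :=
    Real.sq_sqrt (by nlinarith [abs_le.1 hA1])
  have hb2 : Real.sqrt (1 - B^2) ^ 2 = 1 - B^2 :=
    Real.sq_sqrt (by nlinarith [abs_le.1 hB1])
  rw [hA, hB, Real.cos_sub, Real.cos_arccos (abs_le.1 hA1).1 (abs_le.1 hA1).2,
    Real.cos_arccos (abs_le.1 hB1).1 (abs_le.1 hB1).2,
    Real.sin_arccos, Real.sin_arccos, hga, hgb]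
  linear_combination (-(r^2))*hb2 + (-(r^2))*ha2

/-- Chord length on a Hilbert sphere dominates the planar projection chord. -/
lemma hilbert_chord {H : Type*} [NormedAddCommGroup H] [InnerProductSpace ℝ H]
    {r : ℝ} (hr : 0 < r) {u a b : H} (hu : ‖u‖ = 1) (ha : ‖a‖ = r) (hb : ‖b‖ = r) :
    (⟪u, b⟫ - ⟪u, a⟫)^2 +
      (Real.sqrt (r^2 - ⟪u, b⟫^2) - Real.sqrt (r^2 - ⟪u, a⟫^2))^2 ≤ ‖b - a‖^2 := by
  set α := ⟪u, a⟫ with hαdef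
  set β := ⟪u, b⟫ with hβdef
  set wa := a - α • u with hwa
  set wb := b - β • u with hwb
  have hwau : ⟪wa, u⟫ = 0 := by
    simp [hwa, inner_sub_left, real_inner_smul_left, real_inner_comm u a,
      real_inner_self_eq_norm_sq, hu]
    exact sub_eq_zero.2 hαdef.symm
  have hwbu : ⟪wb, u⟫ = 0 := by
    simp [hwb, inner_sub_left, real_inner_smul_left, real_inner_comm u b,
      real_inner_self_eq_norm_sq, hu]
    exact sub_eq_zero.2 hβdef.symm
  have hdecomp : b - a = (wb - wa) + (β - α) • u := by
    simp [hwa, hwb, sub_smul]; abel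
  have hnorm : ‖b - a‖^2 = ‖wb - wa‖^2 + (β - α)^2 := by
    rw [hdecomp, norm_add_sq_real]
    have h1 : ⟪wb - wa, (β - α) • u⟫ = 0 := by
      rw [real_inner_smul_right, inner_sub_left, hwau, hwbu]; ring
    rw [h1, norm_smul]
    simp [hu, abs_of_nonneg, sq_abs]
  have hna : ‖wa‖^2 = r^2 - α^2 := by
    have h : ⟪wa, wa⟫ = r^2 - α^2 := by
      simp only [hwa, inner_sub_left, inner_sub_right, real_inner_smul_left,
        real_inner_smul_right, real_inner_self_eq_norm_sq, hu, ha,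
        real_inner_comm a u, ← hαdef]
      rw [← real_inner_comm a u, ← hαdef, norm_smul, hu, mul_one, Real.norm_eq_abs, sq_abs]
      ring
    rw [← real_inner_self_eq_norm_sq, h]
  have hnb : ‖wb‖^2 = r^2 - β^2 := by
    have h : ⟪wb, wb⟫ = r^2 - β^2 := by
      simp only [hwb, inner_sub_left, inner_sub_right, real_inner_smul_left,
        real_inner_smul_right, real_inner_self_eq_norm_sq, hu, hb,
        real_inner_comm b u, ← hβdef]
      rw [← real_inner_comm b u, ← hβdef, norm_smul, hu, mul_one, Real.norm_eq_abs, sq_abs]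
      ring
    rw [← real_inner_self_eq_norm_sq, h]
  have hga : Real.sqrt (r^2 - α^2) = ‖wa‖ := by
    rw [← hna, Real.sqrt_sq (norm_nonneg _)]
  have hgb : Real.sqrt (r^2 - β^2) = ‖wb‖ := by
    rw [← hnb, Real.sqrt_sq (norm_nonneg _)]
  rw [hnorm, hga, hgb]
  have htri : |‖wb‖ - ‖wa‖| ≤ ‖wb - wa‖ := abs_norm_sub_norm_le wb wa
  nlinarith [sq_abs (‖wb‖ - ‖wa‖), abs_nonneg (‖wb‖ - ‖wa‖), norm_nonneg (wb - wa)]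

/-- chord ≥ angle-chord on the sphere -/
lemma chord_ge_angle {H : Type*} [NormedAddCommGroup H] [InnerProductSpace ℝ H]
    {r : ℝ} (hr : 0 < r) {u a b : H} (hu : ‖u‖ = 1) (ha : ‖a‖ = r) (hb : ‖b‖ = r) :
    2*r^2*(1 - Real.cos (Real.arccos (⟪u, b⟫/r) - Real.arccos (⟪u, a⟫/r))) ≤ ‖b - a‖^2 := by
  have hα : |⟪u, a⟫| ≤ r := by
    have := abs_real_inner_le_norm u a
    rwa [hu, ha, one_mul] at this
  have hβ : |⟪u, b⟫| ≤ r := by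
    have := abs_real_inner_le_norm u b
    rwa [hu, hb, one_mul] at this
  rw [plane_chord hr hα hβ]
  exact hilbert_chord hr hu ha hb

lemma abs_le_of_cos_ge {θ δ : ℝ} (hθ : |θ| ≤ π) (hδ1 : 0 ≤ δ) (hδ2 : δ ≤ π)
    (h : Real.cos δ ≤ Real.cos θ) : |θ| ≤ δ := by
  by_contra h'
  push_neg at h'
  have := Real.cos_lt_cos_of_nonneg_of_le_pi hδ1 hθ h'
  rw [Real.cos_abs] at this
  linarith

lemma sqrt_two_sub_cos_ge {θ δ : ℝ} (h0 : 0 ≤ θ) (hθ : θ ≤ δ) (hδ : δ ≤ 1) :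
    (1 - δ^2) * θ ≤ Real.sqrt (2*(1 - Real.cos θ)) := by
  have key : 2*(1 - Real.cos θ) = (2*Real.sin (θ/2))^2 := by
    have h := Real.sin_sq_eq_half_sub (θ/2)
    rw [show 2*(θ/2) = θ by ring] at h
    linear_combination (-4 : ℝ) * h
  have hsin : 0 ≤ Real.sin (θ/2) := by
    apply Real.sin_nonneg_of_nonneg_of_le_pi (by linarith)
    nlinarith [Real.pi_gt_three]
  rw [key, Real.sqrt_sq (by linarith)]
  rcases eq_or_lt_of_le h0 with h | h
  · simp [← h]
  · have := Real.sin_gt_sub_cube (by linarith : 0 < θ/2)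
    nlinarith [mul_nonneg h0 (by nlinarith : (0:ℝ) ≤ δ^2 - θ^2)]

lemma unif_univ : unif univ = 1 := by
  rw [unif]
  simp [Real.volume_Icc]
  rw [show ENNReal.ofReal (1 + 1) = 2 by norm_num]
  simp [ENNReal.inv_mul_cancel]

lemma integral_sq_unif : ∫ x, x^2 ∂unif = 1/3 := by
  rw [unif, integral_smul_measure, integral_Icc_eq_integral_Ioc,
    ← intervalIntegral.integral_of_le (by norm_num : (-1:ℝ) ≤ 1), integral_pow]
  norm_num [ENNReal.toReal_inv]

lemma norm_toLp_sq {Ω : Type*} [MeasurableSpace Ω] {P : Measure Ω} {f : Ω → ℝ}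
    (hf : MemLp f 2 P) : ‖hf.toLp f‖^2 = ∫ ω, (f ω)^2 ∂P := by
  rw [← real_inner_self_eq_norm_sq, MeasureTheory.L2.inner_def]
  apply integral_congr_ae
  filter_upwards [hf.coeFn_toLp] with ω hω
  rw [hω, RCLike.inner_apply]
  simp [sq]

/-- any permuton process X with X(1) = -X(0) a.s. has energy at least π²/3. -/
theorem permuton_process_energy_ge
    {Ω : Type*} [MeasurableSpace Ω] (P : Measure Ω) [IsProbabilityMeasure P]
    (X : ℝ → Ω → ℝ)
    (hcont : ∀ ω, ContinuousOn (fun t => X t ω) (Icc 0 1))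
    (hval : ∀ t ∈ Icc (0:ℝ) 1, ∀ ω, X t ω ∈ Icc (-1 : ℝ) 1)
    (hunif : ∀ t ∈ Icc (0:ℝ) 1, P.map (X t) = unif)
    (hrev : ∀ᵐ ω ∂P, X 1 ω = -X 0 ω) :
    ENNReal.ofReal (π ^ 2 / 3) ≤
      energyOf (fun s t => ∫ ω, (X t ω - X s ω) ^ 2 ∂P) := by
  have h0m : (0:ℝ) ∈ Icc (0:ℝ) 1 := by constructor <;> norm_num
  have h1m : (1:ℝ) ∈ Icc (0:ℝ) 1 := by constructor <;> norm_num
  have hmeas : ∀ t ∈ Icc (0:ℝ) 1, AEMeasurable (X t) P := by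
    intro t ht
    by_contra h
    have h2 := hunif t ht
    rw [Measure.map_of_not_aemeasurable h] at h2
    have h3 := unif_univ
    rw [← h2] at h3
    simp at h3
  have hbd : ∀ t ∈ Icc (0:ℝ) 1, ∀ ω, ‖X t ω‖ ≤ 1 := by
    intro t ht ω
    have h := hval t ht ω
    rw [Real.norm_eq_abs, abs_le]
    exact ⟨h.1, h.2⟩
  have mem : ∀ t ∈ Icc (0:ℝ) 1, MemLp (X t) 2 P := fun t ht =>
    MemLp.of_bound ((hmeas t ht).aestronglyMeasurable) 1 (ae_of_all _ (hbd t ht))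
  have hsq : ∀ t ∈ Icc (0:ℝ) 1, ∫ ω, (X t ω)^2 ∂P = 1/3 := by
    intro t ht
    have h : ∫ x, x^2 ∂(P.map (X t)) = ∫ ω, (X t ω)^2 ∂P :=
      integral_map (hmeas t ht) (by fun_prop)
    rw [hunif t ht, integral_sq_unif] at h
    exact h.symm
  set r : ℝ := Real.sqrt (1/3) with hrdef
  have hr2 : r^2 = 1/3 := Real.sq_sqrt (by norm_num)
  have hr : 0 < r := Real.sqrt_pos.2 (by norm_num)
  set p : ℝ → (Lp ℝ 2 P) :=
    fun s => if h : s ∈ Icc (0:ℝ) 1 then (mem s h).toLp (X s) else 0 with hpdef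
  have hp : ∀ s (hs : s ∈ Icc (0:ℝ) 1), p s = (mem s hs).toLp (X s) := fun s hs => dif_pos hs
  have hnorm : ∀ s (hs : s ∈ Icc (0:ℝ) 1), ‖p s‖ = r := by
    intro s hs
    have h1 : ‖p s‖^2 = 1/3 := by rw [hp s hs, norm_toLp_sq]; exact hsq s hs
    rw [show ‖p s‖ = Real.sqrt (‖p s‖^2) from (Real.sqrt_sq (norm_nonneg _)).symm, h1]
  have hdiff : ∀ a b (ha : a ∈ Icc (0:ℝ) 1) (hb : b ∈ Icc (0:ℝ) 1),
      ‖p b - p a‖^2 = ∫ ω, (X b ω - X a ω)^2 ∂P := by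
    intro a b ha hb
    rw [hp a ha, hp b hb, ← MemLp.toLp_sub (mem b hb) (mem a ha),
      norm_toLp_sq ((mem b hb).sub (mem a ha))]
    rfl
  have hp1 : p 1 = - p 0 := by
    rw [hp 1 h1m, hp 0 h0m, ← MemLp.toLp_neg (mem 0 h0m)]
    exact MemLp.toLp_congr _ _ hrev
  set u : Lp ℝ 2 P := r⁻¹ • p 0 with hudef
  have hu : ‖u‖ = 1 := by
    rw [hudef, norm_smul, Real.norm_eq_abs, abs_of_pos (inv_pos.2 hr), hnorm 0 h0m]
    field_simp
  have hip0 : ⟪u, p 0⟫ = r := by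
    rw [hudef, real_inner_smul_left, real_inner_self_eq_norm_sq, hnorm 0 h0m]
    field_simp
  have hip1 : ⟪u, p 1⟫ = -r := by
    rw [hp1, inner_neg_right, hip0]
  set D2 : ℝ × ℝ → ℝ := fun q => ∫ ω, (X q.2 ω - X q.1 ω)^2 ∂P with hD2def
  have hDcont : ContinuousOn D2 (Icc 0 1 ×ˢ Icc 0 1) := by
    apply continuousOn_of_dominated (bound := fun _ => 4)
    · intro q hq
      exact (((hmeas q.2 hq.2).sub (hmeas q.1 hq.1)).pow_const 2).aestronglyMeasurable
    · intro q hq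
      apply ae_of_all
      intro ω
      have h1 := hval q.1 hq.1 ω
      have h2 := hval q.2 hq.2 ω
      rw [Real.norm_eq_abs, abs_le]
      constructor <;> nlinarith [h1.1, h1.2, h2.1, h2.2]
    · exact integrable_const 4
    · apply ae_of_all
      intro ω
      have hc := hcont ω
      exact ((hc.comp continuous_snd.continuousOn (fun q hq => hq.2)).sub
        (hc.comp continuous_fst.continuousOn (fun q hq => hq.1))).pow 2
  have hdiag : ∀ s : ℝ, D2 (s, s) = 0 := by intro s; simp [hD2def]
  have hD2nn : ∀ q, 0 ≤ D2 q := fun q => integral_nonneg (fun ω => sq_nonneg _)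
  have key : ∀ δ : ℝ, 0 < δ → δ ≤ 1 →
      ENNReal.ofReal ((1-δ^2)^2 * (π^2/3)) ≤
        energyOf (fun s t => ∫ ω, (X t ω - X s ω)^2 ∂P) := by
    intro δ hδ0 hδ1
    have hδπ : δ ≤ π := le_trans hδ1 (by linarith [Real.pi_gt_three])
    have hcosδ : Real.cos δ < 1 := by
      have h := Real.cos_lt_cos_of_nonneg_of_le_pi le_rfl hδπ hδ0
      simpa using h
    have hε : 0 < 2*r^2*(1 - Real.cos δ) := by
      apply mul_pos (by positivity)
      linarith
    have hUC := (isCompact_Icc.prod isCompact_Icc).uniformContinuousOn_of_continuous hDcont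
    rw [Metric.uniformContinuousOn_iff] at hUC
    obtain ⟨δ', hδ'0, hδ'⟩ := hUC _ hε
    obtain ⟨n, hn⟩ := exists_nat_one_div_lt hδ'0
    set k := n + 1 with hkdef
    have hk0 : (0:ℝ) < k := by positivity
    set t : ℕ → ℝ := fun i => (i : ℝ) / k with htdef
    have hmemIcc : ∀ i, i ≤ k → t i ∈ Icc (0:ℝ) 1 := by
      intro i hi
      constructor
      · positivity
      · rw [htdef]
        rw [div_le_one hk0]
        exact_mod_cast hi
    have hpart : IsPartition k t := by
      refine ⟨Nat.succ_pos n, by simp [htdef], ?_, ?_⟩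
      · rw [htdef]
        field_simp
      · intro i _
        simp only [htdef]
        gcongr
        exact_mod_cast Nat.lt_succ_self i
    have hgap : ∀ i : ℕ, t (i+1) - t i = 1/(k:ℝ) := by
      intro i
      rw [htdef]
      push_cast
      ring
    have hgap' : ∀ i : ℕ, 0 < t (i+1) - t i := by
      intro i
      rw [hgap i]
      positivity
    have hsmall : ∀ i, i < k → D2 (t i, t (i+1)) < 2*r^2*(1 - Real.cos δ) := by
      intro i hi
      have hx : (t i, t (i+1)) ∈ Icc (0:ℝ) 1 ×ˢ Icc (0:ℝ) 1 :=
        ⟨hmemIcc i hi.le, hmemIcc (i+1) hi⟩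
      have hy : (t i, t i) ∈ Icc (0:ℝ) 1 ×ˢ Icc (0:ℝ) 1 :=
        ⟨hmemIcc i hi.le, hmemIcc i hi.le⟩
      have hdd : dist (t (i+1)) (t i) = 1/(k:ℝ) := by
        rw [Real.dist_eq, hgap i, abs_of_pos (by positivity)]
      have hdist : dist (t i, t (i+1)) (t i, t i) < δ' := by
        rw [Prod.dist_eq, dist_self, hdd, max_eq_right (by positivity)]
        calc 1/(k:ℝ) = 1/((n:ℝ)+1) := by rw [hkdef]; push_cast; ring
          _ < δ' := hn
      have h := hδ' _ hx _ hy hdist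
      rw [hdiag (t i), Real.dist_0_eq_abs] at h
      calc D2 (t i, t (i+1)) ≤ |D2 (t i, t (i+1))| := le_abs_self _
        _ < _ := h
    set φ : ℕ → ℝ := fun i => Real.arccos (⟪u, p (t i)⟫ / r) with hφdef
    have hφ0 : φ 0 = 0 := by
      have ht0 : t 0 = 0 := by simp [htdef]
      rw [hφdef]
      simp only
      rw [ht0, hip0, div_self hr.ne', Real.arccos_one]
    have hφk : φ k = π := by
      have htk : t k = 1 := hpart.2.2.1
      rw [hφdef]
      simp only
      rw [htk, hip1, neg_div, div_self hr.ne', Real.arccos_neg_one]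
    have hφmem : ∀ i, 0 ≤ φ i ∧ φ i ≤ π :=
      fun i => ⟨Real.arccos_nonneg _, Real.arccos_le_pi _⟩
    have hseg : ∀ i, i < k → 2*r^2*(1 - Real.cos (φ (i+1) - φ i)) ≤ D2 (t i, t (i+1)) := by
      intro i hi
      have ha := hnorm (t i) (hmemIcc i hi.le)
      have hb := hnorm (t (i+1)) (hmemIcc (i+1) hi)
      have h := chord_ge_angle hr hu ha hb
      calc 2*r^2*(1 - Real.cos (φ (i+1) - φ i)) ≤ ‖p (t (i+1)) - p (t i)‖^2 := h
        _ = D2 (t i, t (i+1)) :=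
          hdiff (t i) (t (i+1)) (hmemIcc i hi.le) (hmemIcc (i+1) hi)
    have hang : ∀ i, i < k → |φ (i+1) - φ i| ≤ δ := by
      intro i hi
      refine abs_le_of_cos_ge ?_ hδ0.le hδπ ?_
      · exact abs_le.2 ⟨by linarith [(hφmem (i+1)).1, (hφmem i).2],
          by linarith [(hφmem (i+1)).2, (hφmem i).1]⟩
      · have h1 := hseg i hi
        have h2 := hsmall i hi
        rw [hr2] at h1 h2
        linarith
    have hchord : ∀ i, i < k →
        r * ((1-δ^2) * |φ (i+1) - φ i|) ≤ Real.sqrt (D2 (t i, t (i+1))) := by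
      intro i hi
      have h1 : (1-δ^2) * |φ (i+1) - φ i|
          ≤ Real.sqrt (2*(1 - Real.cos (φ (i+1) - φ i))) := by
        have h := sqrt_two_sub_cos_ge (abs_nonneg _) (hang i hi) hδ1
        rwa [Real.cos_abs] at h
      have h2 : r * Real.sqrt (2*(1 - Real.cos (φ (i+1) - φ i)))
          ≤ Real.sqrt (D2 (t i, t (i+1))) := by
        rw [← Real.sqrt_sq hr.le, ← Real.sqrt_mul (sq_nonneg r)]
        apply Real.sqrt_le_sqrt
        calc r^2 * (2*(1 - Real.cos (φ (i+1) - φ i)))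
            = 2*r^2*(1 - Real.cos (φ (i+1) - φ i)) := by ring
          _ ≤ D2 (t i, t (i+1)) := hseg i hi
      calc r * ((1-δ^2) * |φ (i+1) - φ i|)
          ≤ r * Real.sqrt (2*(1 - Real.cos (φ (i+1) - φ i))) :=
            mul_le_mul_of_nonneg_left h1 hr.le
        _ ≤ Real.sqrt (D2 (t i, t (i+1))) := h2
    have hsumφ : π ≤ ∑ i ∈ Finset.range k, |φ (i+1) - φ i| := by
      have h2 := Finset.abs_sum_le_sum_abs (fun i => φ (i+1) - φ i) (Finset.range k)
      rw [Finset.sum_range_sub φ k, hφk, hφ0, sub_zero, abs_of_pos Real.pi_pos] at h2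
      exact h2
    have hδsq : (0:ℝ) ≤ 1 - δ^2 := by
      have h := pow_le_pow_left₀ hδ0.le hδ1 2
      rw [one_pow] at h
      linarith
    have hS : r * ((1-δ^2) * π) ≤ ∑ i ∈ Finset.range k, Real.sqrt (D2 (t i, t (i+1))) := by
      calc r * ((1-δ^2) * π) ≤ r * ((1-δ^2) * ∑ i ∈ Finset.range k, |φ (i+1) - φ i|) := by
            apply mul_le_mul_of_nonneg_left _ hr.le
            exact mul_le_mul_of_nonneg_left hsumφ hδsq
        _ = ∑ i ∈ Finset.range k, r * ((1-δ^2) * |φ (i+1) - φ i|) := by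
            rw [Finset.mul_sum, Finset.mul_sum]
        _ ≤ _ := Finset.sum_le_sum (fun i hi => hchord i (Finset.mem_range.1 hi))
    have hCS : (∑ i ∈ Finset.range k, Real.sqrt (D2 (t i, t (i+1))))^2
        ≤ ∑ i ∈ Finset.range k, D2 (t i, t (i+1)) / (t (i+1) - t i) := by
      have h := Finset.sum_mul_sq_le_sq_mul_sq (Finset.range k)
        (fun i => Real.sqrt (D2 (t i, t (i+1))) / Real.sqrt (t (i+1) - t i))
        (fun i => Real.sqrt (t (i+1) - t i))
      have e1 : ∀ i ∈ Finset.range k,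
          Real.sqrt (D2 (t i, t (i+1))) / Real.sqrt (t (i+1) - t i) * Real.sqrt (t (i+1) - t i)
            = Real.sqrt (D2 (t i, t (i+1))) := by
        intro i _
        exact div_mul_cancel₀ _ (Real.sqrt_pos.2 (hgap' i)).ne'
      have e2 : ∀ i ∈ Finset.range k,
          (Real.sqrt (D2 (t i, t (i+1))) / Real.sqrt (t (i+1) - t i))^2
            = D2 (t i, t (i+1)) / (t (i+1) - t i) := by
        intro i _
        rw [div_pow, Real.sq_sqrt (hD2nn _), Real.sq_sqrt (hgap' i).le]
      have e3 : ∑ i ∈ Finset.range k, (Real.sqrt (t (i+1) - t i))^2 = 1 := by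
        rw [Finset.sum_congr rfl (fun i _ => Real.sq_sqrt (hgap' i).le),
          Finset.sum_range_sub t k, hpart.2.2.1, hpart.2.1, sub_zero]
      rw [Finset.sum_congr rfl e1, Finset.sum_congr rfl e2, e3, mul_one] at h
      exact h
    have hfinal : (1-δ^2)^2 * (π^2/3)
        ≤ ∑ i ∈ Finset.range k, D2 (t i, t (i+1)) / (t (i+1) - t i) := by
      have h1 : (r * ((1-δ^2) * π))^2
          ≤ (∑ i ∈ Finset.range k, Real.sqrt (D2 (t i, t (i+1))))^2 := by
        apply pow_le_pow_left₀ _ hS 2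
        positivity
      have h2 : (r * ((1-δ^2) * π))^2 = (1-δ^2)^2 * (π^2/3) := by
        rw [mul_pow, mul_pow, hr2]
        ring
      rw [h2] at h1
      exact le_trans h1 hCS
    refine le_trans (ENNReal.ofReal_le_ofReal hfinal) ?_
    rw [energyOf]
    refine le_iSup_of_le k (le_iSup_of_le t (le_iSup_of_le hpart ?_))
    exact le_rfl
  have htends : Tendsto (fun m : ℕ => ENNReal.ofReal ((1-(1/((m:ℝ)+1))^2)^2 * (π^2/3)))
      atTop (𝓝 (ENNReal.ofReal (π^2/3))) := by
    have h : Tendsto (fun m : ℕ => (1-(1/((m:ℝ)+1))^2)^2 * (π^2/3)) atTop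
        (𝓝 ((1-(0:ℝ)^2)^2 * (π^2/3))) :=
      ((tendsto_const_nhds.sub (tendsto_one_div_add_atTop_nhds_zero_nat.pow 2)).pow 2).mul_const _
    have h2 := (ENNReal.continuous_ofReal.tendsto _).comp h
    norm_num at h2 ⊢
    exact h2
  apply le_of_tendsto' htends
  intro m
  exact key (1/((m:ℝ)+1)) (by positivity)
    (by rw [div_le_one (by positivity)]; linarith [Nat.cast_nonneg (α := ℝ) m])
end

section
/- Let H be a real Hilbert space and let γ : [0,1] → H be a continuous path lying on the unit sphere of H with γ(1) = −γ(0). Then the energy of γ with respect to the norm metric satisfies E(γ) ≥ π². -/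
open MeasureTheory Set Filter
open scoped ENNReal Real Topology

local notation "⟪" x ", " y "⟫" => @inner ℝ _ _ x y

section AuxAngle

variable {H : Type*} [NormedAddCommGroup H] [InnerProductSpace ℝ H]

lemma unit_inner_abs_le_one {u v : H} (hu : ‖u‖ = 1) (hv : ‖v‖ = 1) : |⟪u, v⟫| ≤ 1 := by
  have h := abs_real_inner_le_norm u v
  rw [hu, hv] at h; simpa using h

lemma arccos_antitone {x y : ℝ} (h : x ≤ y) : Real.arccos y ≤ Real.arccos x := by
  rw [Real.arccos_eq_pi_div_two_sub_arcsin, Real.arccos_eq_pi_div_two_sub_arcsin]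
  linarith [Real.monotone_arcsin h]

lemma chord_eq_two_sin {u v : H} (hu : ‖u‖ = 1) (hv : ‖v‖ = 1) :
    ‖u - v‖ = 2 * Real.sin (Real.arccos ⟪u, v⟫ / 2) := by
  have h1 := unit_inner_abs_le_one hu hv
  rw [abs_le] at h1
  have hsq : ‖u - v‖ ^ 2 = 2 - 2 * ⟪u, v⟫ := by
    rw [@norm_sub_sq_real, hu, hv]; ring
  have hcos : Real.cos (Real.arccos ⟪u, v⟫) = ⟪u, v⟫ := Real.cos_arccos h1.1 h1.2
  have hsin : Real.sin (Real.arccos ⟪u, v⟫ / 2) ^ 2 = (1 - ⟪u, v⟫) / 2 := by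
    have := Real.sin_sq_eq_half_sub (Real.arccos ⟪u, v⟫ / 2)
    rw [mul_div_cancel₀ _ (two_ne_zero), hcos] at this
    linarith
  have hs0 : 0 ≤ Real.sin (Real.arccos ⟪u, v⟫ / 2) :=
    Real.sin_nonneg_of_nonneg_of_le_pi (by linarith [Real.arccos_nonneg ⟪u, v⟫])
      (by linarith [Real.arccos_le_pi ⟪u, v⟫, Real.pi_pos])
  have h2 : ‖u - v‖ ^ 2 = (2 * Real.sin (Real.arccos ⟪u, v⟫ / 2)) ^ 2 := by
    rw [hsq, mul_pow, hsin]; ring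
  calc ‖u - v‖ = √(‖u - v‖ ^ 2) := (Real.sqrt_sq (norm_nonneg _)).symm
    _ = √((2 * Real.sin (Real.arccos ⟪u, v⟫ / 2)) ^ 2) := by rw [h2]
    _ = 2 * Real.sin (Real.arccos ⟪u, v⟫ / 2) := Real.sqrt_sq (by positivity)

lemma angle_triangle_unit {u v w : H} (hu : ‖u‖ = 1) (hv : ‖v‖ = 1) (hw : ‖w‖ = 1) :
    Real.arccos ⟪u, w⟫ ≤ Real.arccos ⟪u, v⟫ + Real.arccos ⟪v, w⟫ := by
  have ha := unit_inner_abs_le_one hu hv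
  have hb := unit_inner_abs_le_one hv hw
  rw [abs_le] at ha hb
  by_cases hπ : π ≤ Real.arccos ⟪u, v⟫ + Real.arccos ⟪v, w⟫
  · exact (Real.arccos_le_pi _).trans hπ
  push_neg at hπ
  have key : Real.cos (Real.arccos ⟪u, v⟫ + Real.arccos ⟪v, w⟫) ≤ ⟪u, w⟫ := by
    rw [Real.cos_add, Real.cos_arccos ha.1 ha.2, Real.cos_arccos hb.1 hb.2,
      Real.sin_arccos, Real.sin_arccos]
    have hdecomp : ⟪u, w⟫ = ⟪u, v⟫ * ⟪v, w⟫ + ⟪u - ⟪u, v⟫ • v, w - ⟪v, w⟫ • v⟫ := by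
      have hvv : ⟪v, v⟫ = 1 := by
        rw [real_inner_self_eq_norm_sq, hv]; norm_num
      rw [inner_sub_left, inner_sub_right, inner_sub_right, real_inner_smul_left,
        real_inner_smul_left, real_inner_smul_right, real_inner_smul_right, hvv,
        real_inner_comm v u]
      ring
    have hCS : |⟪u - ⟪u, v⟫ • v, w - ⟪v, w⟫ • v⟫| ≤ ‖u - ⟪u, v⟫ • v‖ * ‖w - ⟪v, w⟫ • v‖ := abs_real_inner_le_norm _ _
    have hnu : ‖u - ⟪u, v⟫ • v‖ = √(1 - ⟪u, v⟫ ^ 2) := by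
      have h2 : ‖u - ⟪u, v⟫ • v‖ ^ 2 = 1 - ⟪u, v⟫ ^ 2 := by
        rw [@norm_sub_sq_real, real_inner_smul_right, norm_smul, hu, hv]
        simp [Real.norm_eq_abs, sq_abs]; ring
      rw [← h2, Real.sqrt_sq (norm_nonneg _)]
    have hnw : ‖w - ⟪v, w⟫ • v‖ = √(1 - ⟪v, w⟫ ^ 2) := by
      have h2 : ‖w - ⟪v, w⟫ • v‖ ^ 2 = 1 - ⟪v, w⟫ ^ 2 := by
        rw [@norm_sub_sq_real, real_inner_smul_right, norm_smul, hw, hv,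
          real_inner_comm w v]
        simp [Real.norm_eq_abs, sq_abs]; ring
      rw [← h2, Real.sqrt_sq (norm_nonneg _)]
    have := neg_abs_le ⟪u - ⟪u, v⟫ • v, w - ⟪v, w⟫ • v⟫
    rw [hdecomp]
    have h3 : -(√(1 - ⟪u, v⟫ ^ 2) * √(1 - ⟪v, w⟫ ^ 2)) ≤ ⟪u - ⟪u, v⟫ • v, w - ⟪v, w⟫ • v⟫ := by
      rw [← hnu, ← hnw]; linarith [hCS, neg_abs_le ⟪u - ⟪u, v⟫ • v, w - ⟪v, w⟫ • v⟫]
    linarith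
  have hcge : (-1 : ℝ) ≤ Real.cos (Real.arccos ⟪u, v⟫ + Real.arccos ⟪v, w⟫) := Real.neg_one_le_cos _
  calc Real.arccos ⟪u, w⟫ ≤ Real.arccos (Real.cos (Real.arccos ⟪u, v⟫ + Real.arccos ⟪v, w⟫)) :=
        arccos_antitone key
    _ = Real.arccos ⟪u, v⟫ + Real.arccos ⟪v, w⟫ := Real.arccos_cos
        (add_nonneg (Real.arccos_nonneg _) (Real.arccos_nonneg _)) hπ.le

lemma angle_sum_le {k : ℕ} {u : ℕ → H} (hn : ∀ i ≤ k, ‖u i‖ = 1) :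
    Real.arccos ⟪u 0, u k⟫ ≤ ∑ i ∈ Finset.range k, Real.arccos ⟪u i, u (i + 1)⟫ := by
  induction k with
  | zero =>
    have : ⟪u 0, u 0⟫ = 1 := by
      rw [real_inner_self_eq_norm_sq, hn 0 le_rfl]; norm_num
    simp [this, Real.arccos_one, hn 0 le_rfl]
  | succ k ih =>
    have h1 : Real.arccos ⟪u 0, u (k + 1)⟫ ≤
        Real.arccos ⟪u 0, u k⟫ + Real.arccos ⟪u k, u (k + 1)⟫ :=
      angle_triangle_unit (hn 0 (Nat.zero_le _)) (hn k (Nat.le_succ _)) (hn (k + 1) le_rfl)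
    rw [Finset.sum_range_succ]
    exact h1.trans (add_le_add (ih fun i hi => hn i (hi.trans (Nat.le_succ _))) le_rfl)

end AuxAngle

lemma le_energyOf (D : ℝ → ℝ → ℝ) {k : ℕ} {t : ℕ → ℝ} (h : IsPartition k t) :
    ENNReal.ofReal (∑ i ∈ Finset.range k, D (t i) (t (i + 1)) / (t (i + 1) - t i)) ≤
      energyOf D :=
  le_iSup_of_le k (le_iSup_of_le t (le_iSup_of_le h le_rfl))

set_option maxHeartbeats 1600000 in
/-- a continuous path on the unit sphere of a real Hilbert space between
two antipodal points has energy at least π². -/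
theorem hilbert_sphere_path_energy_ge
    {H : Type*} [NormedAddCommGroup H] [InnerProductSpace ℝ H]
    (γ : ℝ → H) (hcont : ContinuousOn γ (Icc 0 1))
    (hsph : ∀ t ∈ Icc (0:ℝ) 1, ‖γ t‖ = 1)
    (hant : γ 1 = -γ 0) :
    ENNReal.ofReal (π ^ 2) ≤ energyOf (fun s t => dist (γ s) (γ t) ^ 2) := by
  have hπ := Real.pi_pos
  refine le_of_forall_lt (fun c hc => ?_)
  have hcne : c ≠ ⊤ := (hc.trans ENNReal.ofReal_lt_top).ne
  set r := c.toReal with hrdef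
  have hr : r < π ^ 2 := by
    have h := (ENNReal.toReal_lt_toReal hcne ENNReal.ofReal_ne_top).mpr hc
    rwa [ENNReal.toReal_ofReal (by positivity)] at h
  have hr0 : 0 ≤ r := ENNReal.toReal_nonneg
  -- choose small parameters
  set s : ℝ := min (1/16) ((π^2 - r)/(4*π^2)) with hsdef
  have hs0 : 0 < s := lt_min (by norm_num) (div_pos (by linarith) (by positivity))
  have hs16 : s ≤ 1/16 := min_le_left _ _
  have hsr : s ≤ (π^2 - r)/(4*π^2) := min_le_right _ _
  set η : ℝ := 4 * Real.sqrt s with hηdef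
  have hη0 : 0 < η := by positivity
  have hη2 : η ^ 2 = 16 * s := by rw [hηdef, mul_pow, Real.sq_sqrt hs0.le]; ring
  have hη1 : η ≤ 1 := by
    have h1 : Real.sqrt s ≤ Real.sqrt (1/16) := Real.sqrt_le_sqrt hs16
    have h2 : Real.sqrt (1/16 : ℝ) = 1/4 := by
      rw [show (1/16 : ℝ) = (1/4)^2 by norm_num, Real.sqrt_sq (by norm_num)]
    rw [hηdef]; rw [h2] at h1; linarith
  have hsr' : s * (4*π^2) ≤ π^2 - r := (le_div_iff₀ (by positivity)).mp hsr
  clear_value r s η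
  -- uniform continuity
  have huc : UniformContinuousOn γ (Icc 0 1) :=
    isCompact_Icc.uniformContinuousOn_of_continuous hcont
  obtain ⟨δ, hδ0, hδ⟩ := Metric.uniformContinuousOn_iff.mp huc (2*η/π) (by positivity)
  obtain ⟨n, hn⟩ := exists_nat_one_div_lt hδ0
  set k : ℕ := n + 1 with hkdef
  have hk0 : 0 < k := Nat.succ_pos n
  have hkR : (0:ℝ) < k := by positivity
  set t : ℕ → ℝ := fun i => (i : ℝ) / k with htdef
  have htstep : ∀ i : ℕ, t (i+1) - t i = 1/(k:ℝ) := by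
    intro i; simp only [htdef]; push_cast; field_simp; ring
  have hk1 : 0 < 1/(k:ℝ) := by positivity
  have htmono : ∀ i, t i < t (i+1) := fun i => by
    have h := htstep i; linarith
  have hpart : IsPartition k t := by
    refine ⟨hk0, by simp [htdef], by rw [htdef]; simp only; exact div_self hkR.ne', fun i _ => htmono i⟩
  have htmem : ∀ i ≤ k, t i ∈ Icc (0:ℝ) 1 := by
    intro i hi
    constructor
    · positivity
    · rw [htdef]; simp only
      rw [div_le_one hkR]
      exact_mod_cast hi
  have hnorm : ∀ i ≤ k, ‖γ (t i)‖ = 1 := fun i hi => hsph _ (htmem i hi)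
  clear_value k t
  -- chords and angles
  set x : ℕ → ℝ := fun i => ‖γ (t i) - γ (t (i+1))‖ with hxdef
  set θ : ℕ → ℝ := fun i => Real.arccos ⟪γ (t i), γ (t (i+1))⟫ with hθdef
  have hθ0 : ∀ i, 0 ≤ θ i := fun i => Real.arccos_nonneg _
  have hchord : ∀ i < k, x i = 2 * Real.sin (θ i / 2) := fun i hi =>
    chord_eq_two_sin (hnorm i hi.le) (hnorm (i+1) hi)
  have hdistsmall : ∀ i < k, x i < 2*η/π := by
    intro i hi
    have hdd : dist (t i) (t (i+1)) < δ := by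
      rw [Real.dist_eq, abs_sub_comm, abs_of_pos (by linarith [htstep i, hk1] : (0:ℝ) < t (i+1) - t i), htstep i]
      calc 1/(k:ℝ) = 1/((n:ℝ)+1) := by rw [hkdef]; push_cast; ring
        _ < δ := hn
    have := hδ _ (htmem i hi.le) _ (htmem (i+1) hi)  hdd
    rwa [dist_eq_norm] at this
  have hθη : ∀ i < k, θ i ≤ η := by
    intro i hi
    have h1 : 2/π * (θ i / 2) ≤ Real.sin (θ i / 2) :=
      Real.mul_le_sin (by linarith [hθ0 i]) (by linarith [Real.arccos_le_pi ⟪γ (t i), γ (t (i+1))⟫, hθ0 i])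
    have h2 := hdistsmall i hi
    rw [hchord i hi] at h2
    have hA : θ i ≤ π * Real.sin (θ i / 2) := by
      have h5 := mul_le_mul_of_nonneg_left h1 hπ.le
      calc θ i = π * (2/π * (θ i / 2)) := by field_simp
        _ ≤ π * Real.sin (θ i / 2) := h5
    have hB : π * Real.sin (θ i / 2) < η := by
      have h7 := mul_lt_mul_of_pos_left h2 (half_pos hπ)
      calc π * Real.sin (θ i / 2) = (π/2) * (2 * Real.sin (θ i / 2)) := by ring
        _ < (π/2) * (2 * η / π) := h7
        _ = η := by field_simp
    linarith
  have hchordge : ∀ i < k, (1 - s) * θ i ≤ x i := by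
    intro i hi
    rcases eq_or_lt_of_le (hθ0 i) with h0 | h0
    · rw [← h0]; simp [hxdef]
    · have hx1 : θ i / 2 ≤ 1 := by linarith [hθη i hi]
      have hs := Real.sin_gt_sub_cube (by linarith : 0 < θ i / 2)
      rw [hchord i hi]
      have hθsq : θ i ^ 2 ≤ η ^ 2 := by nlinarith [hθη i hi, hθ0 i]
      nlinarith [hθ0 i, hs, hη2, hs0]
  -- sum of angles at least π
  have hsumθ : π ≤ ∑ i ∈ Finset.range k, θ i := by
    have h := angle_sum_le (k := k) (u := fun i => γ (t i)) hnorm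
    have ht0 : t 0 = 0 := by simp [htdef]
    have htk : t k = 1 := by rw [htdef]; simp only; exact div_self hkR.ne'
    have hinner : ⟪γ (t 0), γ (t k)⟫ = -1 := by
      rw [ht0, htk, hant, inner_neg_right, real_inner_self_eq_norm_sq, hsph 0 (by norm_num)]
      norm_num
    rw [hinner, Real.arccos_neg_one] at h
    exact h
  have hsumx : (1 - s) * π ≤ ∑ i ∈ Finset.range k, x i := by
    calc (1-s)*π ≤ (1-s) * ∑ i ∈ Finset.range k, θ i := by
          apply mul_le_mul_of_nonneg_left hsumθ (by linarith)
      _ = ∑ i ∈ Finset.range k, (1-s) * θ i := Finset.mul_sum _ _ _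
      _ ≤ ∑ i ∈ Finset.range k, x i :=
          Finset.sum_le_sum (fun i hi => hchordge i (Finset.mem_range.mp hi))
  -- Cauchy-Schwarz
  have hsumΔ : ∑ i ∈ Finset.range k, (t (i+1) - t i) = 1 := by
    rw [Finset.sum_range_sub t]
    simp only [htdef, Nat.cast_zero, zero_div, sub_zero]
    field_simp
  have hCS : (∑ i ∈ Finset.range k, x i) ^ 2 ≤
      ∑ i ∈ Finset.range k, x i ^ 2 / (t (i+1) - t i) := by
    have h := Finset.sq_sum_div_le_sum_sq_div (Finset.range k) x
      (g := fun i => t (i+1) - t i) (fun i _ => by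
        show 0 < t (i+1) - t i
        linarith [htstep i, hk1])
    rwa [hsumΔ, div_one] at h
  set S : ℝ := ∑ i ∈ Finset.range k,
      dist (γ (t i)) (γ (t (i+1))) ^ 2 / (t (i+1) - t i) with hSdef
  have hSx : S = ∑ i ∈ Finset.range k, x i ^ 2 / (t (i+1) - t i) := by
    apply Finset.sum_congr rfl
    intro i _
    rw [dist_eq_norm]
  clear_value x θ S
  have hxsum0 : 0 ≤ (1-s) * π := by nlinarith
  have hrS : r < S := by
    have h1 : ((1-s)*π)^2 ≤ (∑ i ∈ Finset.range k, x i)^2 := by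
      apply pow_le_pow_left₀ hxsum0 hsumx
    have h2 : r < ((1-s)*π)^2 := by
      nlinarith [hsr', hr, sq_nonneg π, mul_nonneg (mul_nonneg hs0.le hs0.le) (sq_nonneg π)]
    rw [hSx]; linarith [hCS, h1, h2]
  have hS0 : 0 < S := lt_of_le_of_lt hr0 hrS
  have hcS : c < ENNReal.ofReal S := by
    rw [← ENNReal.ofReal_toReal hcne, ← hrdef]
    exact (ENNReal.ofReal_lt_ofReal_iff hS0).mpr hrS
  have hfin := le_energyOf (fun a b => dist (γ a) (γ b) ^ 2) hpart
  rw [← hSdef] at hfin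
  exact hcS.trans_le hfin
end
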